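/- If Λ(α,k,r) < 1 for a given k, r, and α = z/n, then with probability tending to 1 as n → ∞, the random formula F_k(n,rn) contains no pair of satisfying assignments at Hamming distance exactly z. -/

import Mathlib

open Real

/-- `Λ(α,k,r) = 2 (1 - 2^{1-k} + 2^{-k}(1-α)^k)^r / (α^α (1-α)^{1-α})`. -/
noncomputable def Lam (α : ℝ) (k : ℕ) (r : ℝ) : ℝ :=
  2 * (1 - 2 ^ (1 - (k : ℝ)) + 2 ^ (-(k : ℝ)) * (1 - α) ^ k) ^ r /
    (α ^ α * (1 - α) ^ (1 - α))

/-- A `k`-clause over `n` variables: an injective tuple of `k` variables together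
with signs for each. -/
abbrev ClauseT (n k : ℕ) :=
  {p : (Fin k → Fin n) × (Fin k → Bool) // Function.Injective p.1}

/-- A random formula is a tuple of `m` clauses; `SatF σ F` means `σ` satisfies
every clause of `F`. -/
def SatF {n k m : ℕ} (σ : Fin n → Bool) (F : Fin m → ClauseT n k) : Prop :=
  ∀ j : Fin m, ∃ i : Fin k, σ ((F j).1.1 i) = (F j).1.2 i

instance {n k m : ℕ} (σ : Fin n → Bool) (F : Fin m → ClauseT n k) :
    Decidable (SatF σ F) := by unfold SatF; infer_instance

/-- The probability (under the uniform random formula with `n` variables, `m`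
clauses of size `k`) that there exists a pair of satisfying assignments at Hamming
distance exactly `z`. -/
noncomputable def probPairAtDist (k n m z : ℕ) : ℝ :=
  ((Finset.univ.filter
      (fun F : Fin m → ClauseT n k =>
        ∃ σ τ : Fin n → Bool, SatF σ F ∧ SatF τ F ∧ hammingDist σ τ = z)).card : ℝ) /
    (Fintype.card (Fin m → ClauseT n k) : ℝ)

open Real Finset

lemma q_nonneg (k : ℕ) {α : ℝ} (hα0 : 0 ≤ α) (hα1 : α ≤ 1) :
    0 ≤ 1 - 2 ^ (1 - (k:ℝ)) + 2 ^ (-(k:ℝ)) * (1 - α) ^ k := by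
  have h1α : (0:ℝ) ≤ 1 - α := by linarith
  rcases Nat.eq_zero_or_pos k with hk0 | hk1
  · subst hk0; norm_num
  · have h1 : (2:ℝ) ^ (1 - (k:ℝ)) ≤ 1 := by
      apply Real.rpow_le_one_of_one_le_of_nonpos (by norm_num)
      have : (1:ℝ) ≤ (k:ℝ) := by exact_mod_cast hk1
      linarith
    have h2 : (0:ℝ) ≤ 2 ^ (-(k:ℝ)) * (1 - α) ^ k := by positivity
    linarith

lemma d_pos {α : ℝ} (hα0 : 0 ≤ α) (hα1 : α ≤ 1) :
    0 < α ^ α * (1 - α) ^ (1 - α) := by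
  have h1α : (0:ℝ) ≤ 1 - α := by linarith
  have h1 : 0 < α ^ α := by
    rcases eq_or_lt_of_le hα0 with h | h
    · rw [← h]; norm_num
    · exact Real.rpow_pos_of_pos h α
  have h2 : 0 < (1 - α) ^ (1 - α) := by
    rcases eq_or_lt_of_le h1α with h | h
    · rw [← h]; norm_num
    · exact Real.rpow_pos_of_pos h (1 - α)
  exact mul_pos h1 h2

lemma Lam_nonneg (k : ℕ) {α : ℝ} (r : ℝ) (hα0 : 0 ≤ α) (hα1 : α ≤ 1) :
    0 ≤ Lam α k r := by
  apply div_nonneg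
  · exact mul_nonneg (by norm_num) (Real.rpow_nonneg (q_nonneg k hα0 hα1) r)
  · exact (d_pos hα0 hα1).le


lemma descFac_mul_pow_le (k : ℕ) : ∀ a n : ℕ, a ≤ n →
    a.descFactorial k * n ^ k ≤ n.descFactorial k * a ^ k := by
  induction k with
  | zero => simp
  | succ k ih =>
    intro a n h
    rw [Nat.descFactorial_succ, Nat.descFactorial_succ, pow_succ, pow_succ]
    have key : (a - k) * n ≤ (n - k) * a := by
      rw [Nat.sub_mul, Nat.sub_mul, Nat.mul_comm a n, Nat.mul_comm n a]
      exact Nat.sub_le_sub_left (Nat.mul_le_mul_left k h) (a * n)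
    calc (a - k) * a.descFactorial k * (n ^ k * n)
        = ((a - k) * n) * (a.descFactorial k * n ^ k) := by ring
      _ ≤ ((n - k) * a) * (n.descFactorial k * a ^ k) := Nat.mul_le_mul key (ih a n h)
      _ = (n - k) * n.descFactorial k * (a ^ k * a) := by ring

def clauseEquiv (n k : ℕ) : ClauseT n k ≃ {f : Fin k → Fin n // Function.Injective f} × (Fin k → Bool) where
  toFun c := (⟨c.1.1, c.2⟩, c.1.2)
  invFun p := ⟨(p.1.1, p.2), p.1.2⟩
  left_inv c := rfl
  right_inv p := rfl

lemma card_inj_fun (n k : ℕ) : Fintype.card {f : Fin k → Fin n // Function.Injective f}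
    = n.descFactorial k := by
  rw [Fintype.card_congr (Equiv.subtypeInjectiveEquivEmbedding (Fin k) (Fin n)),
    Fintype.card_embedding_eq, Fintype.card_fin, Fintype.card_fin]

lemma card_clauseT (n k : ℕ) : Fintype.card (ClauseT n k) = n.descFactorial k * 2 ^ k := by
  rw [Fintype.card_congr (clauseEquiv n k), Fintype.card_prod, card_inj_fun]
  simp


section
variable {n k z : ℕ} (σ τ : Fin n → Bool)

lemma card_bad_ge :
    n.descFactorial k ≤ (univ.filter (fun c : ClauseT n k => ∀ i, σ (c.1.1 i) ≠ c.1.2 i)).card := by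
  classical
  rw [← card_inj_fun n k, ← Finset.card_univ]
  apply Finset.card_le_card_of_injOn
    (fun v => (⟨(v.1, fun i => !σ (v.1 i)), v.2⟩ : ClauseT n k))
  · intro v _
    simp only [Finset.mem_coe, Finset.mem_filter, Finset.mem_univ, true_and]
    intro i h
    exact absurd h (by simp)
  · intro v _ w _ hvw
    have h1 : v.1 = w.1 := congrArg (fun c : ClauseT n k => c.1.1) hvw
    exact Subtype.ext h1

lemma card_badInter_le (hd : hammingDist σ τ = z) :
    ((univ.filter (fun c : ClauseT n k => ∀ i, σ (c.1.1 i) ≠ c.1.2 i)) ∩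
      (univ.filter (fun c : ClauseT n k => ∀ i, τ (c.1.1 i) ≠ c.1.2 i))).card
      ≤ (n - z).descFactorial k := by
  classical
  set s := (univ.filter (fun c : ClauseT n k => ∀ i, σ (c.1.1 i) ≠ c.1.2 i)) ∩
      (univ.filter (fun c : ClauseT n k => ∀ i, τ (c.1.1 i) ≠ c.1.2 i)) with hs
  have hcardD : Fintype.card {i : Fin n // σ i = τ i} = n - z := by
    have h1 : (univ.filter (fun i : Fin n => σ i = τ i)).card
        + (univ.filter (fun i : Fin n => ¬ σ i = τ i)).card = n := by
      rw [Finset.card_filter_add_card_filter_not]; simp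
    have h2 : (univ.filter (fun i : Fin n => ¬ σ i = τ i)).card = z := by
      rw [← hd]; rfl
    rw [Fintype.card_subtype]
    omega
  have hmem : ∀ c : ClauseT n k, c ∈ s →
      (∀ i, σ (c.1.1 i) ≠ c.1.2 i) ∧ (∀ i, τ (c.1.1 i) ≠ c.1.2 i) := by
    intro c hc
    simp only [hs, Finset.mem_inter, Finset.mem_filter, Finset.mem_univ, true_and] at hc
    exact hc
  have hagree : ∀ c : ClauseT n k, c ∈ s → ∀ i, σ (c.1.1 i) = τ (c.1.1 i) := by
    intro c hc i
    have h1 := (hmem c hc).1 i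
    have h2 := (hmem c hc).2 i
    revert h1 h2
    cases σ (c.1.1 i) <;> cases τ (c.1.1 i) <;> cases c.1.2 i <;> simp
  have key : s.card ≤ Fintype.card (Fin k ↪ {i : Fin n // σ i = τ i}) := by
    rw [← Fintype.card_coe s]
    apply Fintype.card_le_of_injective
      (fun c => (⟨fun i => (⟨c.1.1.1 i, hagree c.1 c.2 i⟩ : {i : Fin n // σ i = τ i}),
        fun a b hab => c.1.2 (congrArg Subtype.val hab)⟩ : Fin k ↪ {i : Fin n // σ i = τ i}))
    intro c c' hcc
    have hv : c.1.1.1 = c'.1.1.1 := by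
      funext i
      exact congrArg Subtype.val (congrFun (congrArg DFunLike.coe hcc) i)
    have hb : c.1.1.2 = c'.1.1.2 := by
      funext i
      have h1 := (hmem c.1 c.2).1 i
      have h2 := (hmem c'.1 c'.2).1 i
      rw [← hv] at h2
      revert h1 h2
      cases σ (c.1.1.1 i) <;> cases c.1.1.2 i <;> cases c'.1.1.2 i <;> simp
    exact Subtype.ext (Subtype.ext (Prod.ext hv hb))
  calc s.card ≤ Fintype.card (Fin k ↪ {i : Fin n // σ i = τ i}) := key
    _ = (n - z).descFactorial k := by
        rw [Fintype.card_embedding_eq, Fintype.card_fin, hcardD]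
end


section
variable {n k z : ℕ} (σ τ : Fin n → Bool)

lemma card_sat2_le (hd : hammingDist σ τ = z) :
    ((univ.filter (fun c : ClauseT n k =>
        (∃ i, σ (c.1.1 i) = c.1.2 i) ∧ (∃ i, τ (c.1.1 i) = c.1.2 i))).card : ℝ)
      ≤ (Fintype.card (ClauseT n k) : ℝ) - 2 * n.descFactorial k + (n - z).descFactorial k := by
  classical
  set S := univ.filter (fun c : ClauseT n k =>
      (∃ i, σ (c.1.1 i) = c.1.2 i) ∧ (∃ i, τ (c.1.1 i) = c.1.2 i)) with hS
  set Bs := univ.filter (fun c : ClauseT n k => ∀ i, σ (c.1.1 i) ≠ c.1.2 i) with hBs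
  set Bt := univ.filter (fun c : ClauseT n k => ∀ i, τ (c.1.1 i) ≠ c.1.2 i) with hBt
  have hcompl : Bs ∪ Bt = univ.filter (fun c : ClauseT n k =>
      ¬((∃ i, σ (c.1.1 i) = c.1.2 i) ∧ (∃ i, τ (c.1.1 i) = c.1.2 i))) := by
    ext c
    simp only [hBs, hBt, Finset.mem_union, Finset.mem_filter, Finset.mem_univ, true_and, not_and_or, not_exists]
  have h1 : S.card + (Bs ∪ Bt).card = Fintype.card (ClauseT n k) := by
    rw [hcompl, hS, Finset.card_filter_add_card_filter_not, Finset.card_univ]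
  have h2 : (Bs ∪ Bt).card + (Bs ∩ Bt).card = Bs.card + Bt.card :=
    Finset.card_union_add_card_inter Bs Bt
  have h3 : n.descFactorial k ≤ Bs.card := card_bad_ge (k := k) σ
  have h4 : n.descFactorial k ≤ Bt.card := card_bad_ge (k := k) τ
  have h5 : (Bs ∩ Bt).card ≤ (n - z).descFactorial k := card_badInter_le σ τ hd
  have hc1 : ((S.card : ℝ)) + (Bs ∪ Bt).card = (Fintype.card (ClauseT n k) : ℝ) := by
    exact_mod_cast congrArg (Nat.cast : ℕ → ℝ) h1
  have hc2 : ((Bs ∪ Bt).card : ℝ) + (Bs ∩ Bt).card = (Bs.card : ℝ) + Bt.card := by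
    exact_mod_cast congrArg (Nat.cast : ℕ → ℝ) h2
  have hc3 : (n.descFactorial k : ℝ) ≤ Bs.card := by exact_mod_cast h3
  have hc4 : (n.descFactorial k : ℝ) ≤ Bt.card := by exact_mod_cast h4
  have hc5 : ((Bs ∩ Bt).card : ℝ) ≤ ((n - z).descFactorial k : ℝ) := by exact_mod_cast h5
  linarith
end


lemma pair_satF_card (n k m : ℕ) (σ τ : Fin n → Bool) :
    (univ.filter (fun F : Fin m → ClauseT n k => SatF σ F ∧ SatF τ F)).card
      = (univ.filter (fun c : ClauseT n k =>
          (∃ i, σ (c.1.1 i) = c.1.2 i) ∧ (∃ i, τ (c.1.1 i) = c.1.2 i))).card ^ m := by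
  classical
  have : (univ.filter (fun F : Fin m → ClauseT n k => SatF σ F ∧ SatF τ F))
      = Fintype.piFinset (fun _ : Fin m => univ.filter (fun c : ClauseT n k =>
          (∃ i, σ (c.1.1 i) = c.1.2 i) ∧ (∃ i, τ (c.1.1 i) = c.1.2 i))) := by
    ext F
    simp only [Finset.mem_filter, Finset.mem_univ, true_and, Fintype.mem_piFinset]
    simp only [SatF, forall_and]
  rw [this, Fintype.card_piFinset]
  simp

lemma pairs_card_le (n z : ℕ) :
    ((univ : Finset ((Fin n → Bool) × (Fin n → Bool))).filter
        (fun p => hammingDist p.1 p.2 = z)).card ≤ 2 ^ n * n.choose z := by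
  classical
  have : ((univ : Finset (Fin n → Bool)) ×ˢ Finset.powersetCard z (univ : Finset (Fin n))).card
      = 2 ^ n * n.choose z := by
    rw [Finset.card_product, Finset.card_powersetCard]
    simp
  rw [← this]
  apply Finset.card_le_card_of_injOn
    (fun p => (p.1, univ.filter (fun i => p.1 i ≠ p.2 i)))
  · intro p hp
    simp only [Finset.mem_coe, Finset.mem_filter, Finset.mem_univ, true_and] at hp
    simp only [Finset.mem_coe, Finset.mem_product, Finset.mem_univ, true_and, Finset.mem_powersetCard_univ]
    exact hp
  · intro p _ q _ hpq
    simp only [] at hpq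
    have h1 : p.1 = q.1 := (Prod.ext_iff.mp hpq).1
    have h2 : univ.filter (fun i => p.1 i ≠ p.2 i) = univ.filter (fun i => q.1 i ≠ q.2 i) :=
      (Prod.ext_iff.mp hpq).2
    have h3 : p.2 = q.2 := by
      funext i
      have := Finset.ext_iff.mp h2 i
      simp only [Finset.mem_filter, Finset.mem_univ, true_and, ← h1] at this
      revert this
      cases hp1 : p.1 i <;> cases hp2 : p.2 i <;> cases hq2 : q.2 i <;> simp
    exact Prod.ext h1 h3

lemma entropy_bound (n zz : ℕ) (α : ℝ) (hα0 : 0 ≤ α) (hα1 : α ≤ 1)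
    (hzn : (zz : ℝ) = α * n) (hzle : zz ≤ n) :
    (n.choose zz : ℝ) * (α ^ α * (1 - α) ^ (1 - α)) ^ n ≤ 1 := by
  have h1α : (0:ℝ) ≤ 1 - α := by linarith
  have hd : (α ^ α * (1 - α) ^ (1 - α)) ^ n = α ^ zz * (1 - α) ^ (n - zz) := by
    rw [mul_pow]
    congr 1
    · rw [← Real.rpow_natCast (α ^ α) n, ← Real.rpow_natCast α zz,
        ← Real.rpow_mul hα0, hzn]
    · rw [← Real.rpow_natCast ((1-α) ^ (1-α)) n, ← Real.rpow_natCast (1-α) (n - zz),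
        ← Real.rpow_mul h1α]
      congr 1
      have : ((n - zz : ℕ) : ℝ) = (n : ℝ) - zz := by
        push_cast [Nat.cast_sub hzle]; ring
      rw [this, hzn]; ring
  rw [hd]
  have hsum : ∑ i ∈ Finset.range (n+1), α ^ i * (1-α) ^ (n - i) * (n.choose i) = 1 := by
    rw [← add_pow]
    norm_num
  calc (n.choose zz : ℝ) * (α ^ zz * (1 - α) ^ (n - zz))
      = α ^ zz * (1-α) ^ (n - zz) * (n.choose zz) := by ring
    _ ≤ ∑ i ∈ Finset.range (n+1), α ^ i * (1-α) ^ (n - i) * (n.choose i) := by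
        apply Finset.single_le_sum (f := fun i => α ^ i * (1-α) ^ (n - i) * (n.choose i : ℝ))
        · intro i _; positivity
        · exact Finset.mem_range.mpr (Nat.lt_succ_of_le hzle)
    _ = 1 := hsum


lemma q_bound (n k zz : ℕ) (α : ℝ) (hn : 1 ≤ n) (hzle : zz ≤ n)
    (hzn : (zz:ℝ) = α * n) :
    (Fintype.card (ClauseT n k) : ℝ) - 2 * n.descFactorial k + (n - zz).descFactorial k
      ≤ (1 - 2 ^ (1 - (k:ℝ)) + 2 ^ (-(k:ℝ)) * (1 - α) ^ k) * Fintype.card (ClauseT n k) := by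
  have hnpos : (0:ℝ) < n := by exact_mod_cast hn
  have h1α : (1 - α) = ((n - zz : ℕ) : ℝ) / n := by
    rw [Nat.cast_sub hzle, hzn]; field_simp
  have hN : (Fintype.card (ClauseT n k) : ℝ) = (n.descFactorial k : ℝ) * 2 ^ k := by
    rw [card_clauseT]; push_cast; ring
  have h2a : (2:ℝ) ^ (1 - (k:ℝ)) * 2 ^ k = 2 := by
    rw [← Real.rpow_natCast 2 k, ← Real.rpow_add two_pos]; norm_num
  have h2b : (2:ℝ) ^ (-(k:ℝ)) * 2 ^ k = 1 := by
    rw [← Real.rpow_natCast 2 k, ← Real.rpow_add two_pos]; norm_num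
  have hkey : ((n - zz).descFactorial k : ℝ) ≤ (1 - α) ^ k * n.descFactorial k := by
    have hnat := descFac_mul_pow_le k (n - zz) n (Nat.sub_le n zz)
    have hcast : ((n - zz).descFactorial k : ℝ) * (n:ℝ) ^ k
        ≤ (n.descFactorial k : ℝ) * ((n - zz : ℕ) : ℝ) ^ k := by exact_mod_cast hnat
    rw [h1α, div_pow, div_mul_eq_mul_div, le_div_iff₀ (by positivity)]
    linarith
  have expand : (1 - 2 ^ (1 - (k:ℝ)) + 2 ^ (-(k:ℝ)) * (1 - α) ^ k)
        * ((n.descFactorial k : ℝ) * 2 ^ k)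
      = (n.descFactorial k : ℝ) * 2 ^ k - 2 * (n.descFactorial k : ℝ)
        + (1 - α) ^ k * (n.descFactorial k : ℝ) := by
    linear_combination (-(n.descFactorial k : ℝ)) * h2a
      + ((1 - α) ^ k * (n.descFactorial k : ℝ)) * h2b
  rw [hN, expand]
  linarith


lemma prob_le_Lam (k n mm zz : ℕ) (α r : ℝ) (hα0 : 0 ≤ α) (hα1 : α ≤ 1) (hr0 : 0 ≤ r)
    (hk : k ≤ n) (hn : 1 ≤ n) (hzn : (zz:ℝ) = α * n) (hmn : (mm:ℝ) = r * n) :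
    probPairAtDist k n mm zz ≤ Lam α k r ^ n := by
  classical
  have hnpos : (0:ℝ) < n := by exact_mod_cast hn
  have hzle : zz ≤ n := by
    have : (zz:ℝ) ≤ (n:ℝ) := by rw [hzn]; nlinarith
    exact_mod_cast this
  have h1α : (0:ℝ) ≤ 1 - α := by linarith
  set q : ℝ := 1 - 2 ^ (1 - (k:ℝ)) + 2 ^ (-(k:ℝ)) * (1 - α) ^ k with hqdef
  have hq0 : 0 ≤ q := q_nonneg k hα0 hα1
  set d : ℝ := α ^ α * (1 - α) ^ (1 - α) with hddef
  have hd0 : 0 < d := d_pos hα0 hα1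
  set N : ℕ := Fintype.card (ClauseT n k) with hNdef
  have hNpos : 0 < N := by
    rw [hNdef, card_clauseT]
    refine Nat.mul_pos (Nat.pos_of_ne_zero fun h0 => ?_) (Nat.pow_pos (by norm_num))
    exact absurd (Nat.descFactorial_eq_zero_iff_lt.mp h0) (Nat.not_lt.mpr hk)
  have hNR : (0:ℝ) < N := by exact_mod_cast hNpos
  have hcardF : (Fintype.card (Fin mm → ClauseT n k) : ℝ) = (N:ℝ) ^ mm := by
    rw [Fintype.card_fun, Fintype.card_fin]; push_cast; ring
  set pairs := (univ : Finset ((Fin n → Bool) × (Fin n → Bool))).filter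
      (fun p => hammingDist p.1 p.2 = zz) with hpairs
  set E := (Finset.univ.filter
      (fun F : Fin mm → ClauseT n k =>
        ∃ σ τ : Fin n → Bool, SatF σ F ∧ SatF τ F ∧ hammingDist σ τ = zz)) with hE
  -- union bound
  have hsub : E ⊆ pairs.biUnion (fun p =>
      univ.filter (fun F : Fin mm → ClauseT n k => SatF p.1 F ∧ SatF p.2 F)) := by
    intro F hF
    simp only [hE, Finset.mem_filter, Finset.mem_univ, true_and] at hF
    obtain ⟨σ, τ, h1, h2, h3⟩ := hF
    refine Finset.mem_biUnion.mpr ⟨(σ, τ), ?_, ?_⟩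
    · simp [hpairs, h3]
    · simp [h1, h2]
  have hterm : ∀ p ∈ pairs,
      (((univ.filter (fun F : Fin mm → ClauseT n k => SatF p.1 F ∧ SatF p.2 F)).card : ℝ))
        ≤ (q * N) ^ mm := by
    intro p hp
    have hdist : hammingDist p.1 p.2 = zz := by
      simpa [hpairs] using hp
    rw [pair_satF_card]
    have hS : ((univ.filter (fun c : ClauseT n k =>
        (∃ i, p.1 (c.1.1 i) = c.1.2 i) ∧ (∃ i, p.2 (c.1.1 i) = c.1.2 i))).card : ℝ) ≤ q * N :=
      (card_sat2_le p.1 p.2 hdist).trans (q_bound n k zz α hn hzle hzn)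
    calc (((univ.filter (fun c : ClauseT n k =>
          (∃ i, p.1 (c.1.1 i) = c.1.2 i) ∧ (∃ i, p.2 (c.1.1 i) = c.1.2 i))).card ^ mm : ℕ) : ℝ)
        = (((univ.filter (fun c : ClauseT n k =>
          (∃ i, p.1 (c.1.1 i) = c.1.2 i) ∧ (∃ i, p.2 (c.1.1 i) = c.1.2 i))).card : ℝ)) ^ mm := by
          push_cast; ring
      _ ≤ (q * N) ^ mm := pow_le_pow_left₀ (by positivity) hS mm
  have hEcard : ((E.card : ℝ)) ≤ (pairs.card : ℝ) * (q * N) ^ mm := by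
    have h1 : E.card ≤ ∑ p ∈ pairs,
        (univ.filter (fun F : Fin mm → ClauseT n k => SatF p.1 F ∧ SatF p.2 F)).card :=
      (Finset.card_le_card hsub).trans (Finset.card_biUnion_le)
    calc ((E.card : ℝ)) ≤ ((∑ p ∈ pairs,
          (univ.filter (fun F : Fin mm → ClauseT n k => SatF p.1 F ∧ SatF p.2 F)).card : ℕ) : ℝ) := by
          exact_mod_cast h1
      _ = ∑ p ∈ pairs, (((univ.filter
          (fun F : Fin mm → ClauseT n k => SatF p.1 F ∧ SatF p.2 F)).card : ℝ)) := by push_cast; rfl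
      _ ≤ ∑ _p ∈ pairs, (q * N) ^ mm := Finset.sum_le_sum hterm
      _ = (pairs.card : ℝ) * (q * N) ^ mm := by rw [Finset.sum_const, nsmul_eq_mul]
  have hprob : probPairAtDist k n mm zz ≤ (pairs.card : ℝ) * q ^ mm := by
    rw [probPairAtDist, hcardF]
    rw [div_le_iff₀ (by positivity)]
    calc ((E.card : ℝ)) ≤ (pairs.card : ℝ) * (q * N) ^ mm := hEcard
      _ = (pairs.card : ℝ) * q ^ mm * (N:ℝ) ^ mm := by rw [mul_pow]; ring
  have hpairsle : ((pairs.card : ℝ)) ≤ 2 ^ n * n.choose zz := by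
    have := pairs_card_le n zz
    calc ((pairs.card : ℝ)) ≤ ((2 ^ n * n.choose zz : ℕ) : ℝ) := by exact_mod_cast this
      _ = 2 ^ n * n.choose zz := by push_cast; ring
  have hqm : q ^ mm = (q ^ r) ^ n := by
    rw [← Real.rpow_natCast q mm, ← Real.rpow_natCast (q ^ r) n, ← Real.rpow_mul hq0, hmn]
  have hLam : Lam α k r ^ n = 2 ^ n * (q ^ r) ^ n / d ^ n := by
    rw [Lam, ← hqdef, ← hddef, div_pow, mul_pow]
  have hent : (n.choose zz : ℝ) * d ^ n ≤ 1 := entropy_bound n zz α hα0 hα1 hzn hzle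
  have hqr0 : (0:ℝ) ≤ q ^ r := Real.rpow_nonneg hq0 r
  calc probPairAtDist k n mm zz ≤ (pairs.card : ℝ) * q ^ mm := hprob
    _ ≤ (2 ^ n * n.choose zz) * q ^ mm := by
        apply mul_le_mul_of_nonneg_right hpairsle
        rw [hqm]; positivity
    _ = (2 ^ n * n.choose zz) * (q ^ r) ^ n := by rw [hqm]
    _ ≤ 2 ^ n * (q ^ r) ^ n / d ^ n := by
        rw [le_div_iff₀ (by positivity)]
        have h2 : (0:ℝ) ≤ 2 ^ n * (q ^ r) ^ n := by positivity
        nlinarith [hent, h2, mul_nonneg (mul_nonneg (by positivity : (0:ℝ) ≤ (2:ℝ)^n) (Nat.cast_nonneg (n.choose zz))) (pow_nonneg hqr0 n)]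
    _ = Lam α k r ^ n := hLam.symm


/-- If `Λ(α,k,r) < 1` with `α = z/n` and `r = m/n`, then w.h.p. the random formula
`F_k(n, rn)` contains no pair of satisfying assignments at Hamming distance exactly
`z = αn`. -/
theorem whp_no_pair_at_distance (k : ℕ) (α r : ℝ) (ν z m : ℕ → ℕ)
    (hν : StrictMono ν)
    (hz : ∀ j, (z j : ℝ) = α * (ν j : ℝ))
    (hm : ∀ j, (m j : ℝ) = r * (ν j : ℝ))
    (hΛ : Lam α k r < 1) :
    Filter.Tendsto (fun j => probPairAtDist k (ν j) (m j) (z j))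
      Filter.atTop (nhds 0) := by
  have hν1 : 0 < ν 1 := Nat.lt_of_le_of_lt (Nat.zero_le (ν 0)) (hν Nat.zero_lt_one)
  have hν1R : (0:ℝ) < ν 1 := by exact_mod_cast hν1
  have hα0 : 0 ≤ α := by
    have h := hz 1
    nlinarith [(Nat.cast_nonneg (z 1) : (0:ℝ) ≤ (z 1 : ℝ)), hν1R]
  have hr0 : 0 ≤ r := by
    have h := hm 1
    nlinarith [(Nat.cast_nonneg (m 1) : (0:ℝ) ≤ (m 1 : ℝ)), hν1R]
  rcases le_or_gt α 1 with hα1 | hα1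
  · -- main case
    apply squeeze_zero' (g := fun j => Lam α k r ^ ν j)
    · exact Filter.Eventually.of_forall fun j => by
        unfold probPairAtDist
        positivity
    · rw [Filter.eventually_atTop]
      refine ⟨max 1 k, fun j hj => ?_⟩
      have hjν : j ≤ ν j := hν.le_apply
      exact prob_le_Lam k (ν j) (m j) (z j) α r hα0 hα1 hr0
        (le_trans (le_trans (le_max_right 1 k) hj) hjν)
        (le_trans (le_trans (le_max_left 1 k) hj) hjν) (hz j) (hm j)
    · exact (tendsto_pow_atTop_nhds_zero_of_lt_one (Lam_nonneg k r hα0 hα1) hΛ).comp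
        hν.tendsto_atTop
  · -- α > 1 : eventually the event is empty
    have hev : ∀ᶠ j in Filter.atTop, probPairAtDist k (ν j) (m j) (z j) = 0 := by
      rw [Filter.eventually_atTop]
      refine ⟨1, fun j hj => ?_⟩
      have hνj : 0 < ν j := lt_of_lt_of_le hν1 (hν.monotone hj)
      have hνjR : (0:ℝ) < ν j := by exact_mod_cast hνj
      have hzgt : ν j < z j := by
        have : (ν j : ℝ) < (z j : ℝ) := by rw [hz j]; nlinarith
        exact_mod_cast this
      have hempty : (Finset.univ.filter
          (fun F : Fin (m j) → ClauseT (ν j) k =>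
            ∃ σ τ : Fin (ν j) → Bool, SatF σ F ∧ SatF τ F ∧ hammingDist σ τ = z j)) = ∅ := by
        rw [Finset.filter_eq_empty_iff]
        rintro F - ⟨σ, τ, -, -, h3⟩
        have := hammingDist_le_card_fintype (x := σ) (y := τ)
        rw [h3, Fintype.card_fin] at this
        omega
      rw [probPairAtDist, hempty]
      simp
    exact Filter.Tendsto.congr' (hev.mono fun j h => h.symm) tendsto_const_nhds
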